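/- Let n > 2, and k odd with 2^r < k < 2^{r+1} and k < 2^n. Then the element k·2^{2n+r} + 1 does not belong to the submonoid of ℕ generated by {k·2^{n+i} + 1 : 0 ≤ i ≤ n + r - 1}. -/

import Mathlib

theorem last_generator_not_in (n k r : ℕ) (hn : 2 < n) (hk : Odd k)
    (hklt : k < 2 ^ n) (hr1 : 2 ^ r < k) (hr2 : k < 2 ^ (r + 1)) :
    k * 2 ^ (2 * n + r) + 1 ∉
      AddSubmonoid.closure {m : ℕ | ∃ i : ℕ, i < n + r ∧ m = k * 2 ^ (n + i) + 1} := by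
  intro hmem
  obtain ⟨c, hc⟩ := hk
  have hkpos : 0 < k := by omega
  have hP : ∀ x ∈ AddSubmonoid.closure
      {m : ℕ | ∃ i : ℕ, i < n + r ∧ m = k * 2 ^ (n + i) + 1},
      x = 0 ∨ ∃ s T, 1 ≤ s ∧ x = k * T + s ∧ 2 ^ n ∣ T ∧
        s * (k * 2 ^ n + 1) ≤ x ∧ (s = 1 → ∃ i, i < n + r ∧ T = 2 ^ (n + i)) := by
    intro x hx
    induction hx using AddSubmonoid.closure_induction with
    | mem y hy =>
      obtain ⟨i, hi, rfl⟩ := hy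
      right
      refine ⟨1, 2 ^ (n + i), le_refl 1, by ring, pow_dvd_pow 2 (by omega), ?_,
        fun _ => ⟨i, hi, rfl⟩⟩
      have : 2 ^ n ≤ 2 ^ (n + i) := Nat.pow_le_pow_right (by norm_num) (by omega)
      have := Nat.mul_le_mul_left k this
      omega
    | zero => left; rfl
    | add a b _ _ ha hb =>
      rcases ha with rfl | ⟨s1, T1, hs1, he1, hd1, hl1, ho1⟩
      · simpa using hb
      rcases hb with rfl | ⟨s2, T2, hs2, he2, hd2, hl2, _⟩
      · right; exact ⟨s1, T1, hs1, by omega, hd1, by omega, ho1⟩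
      · right
        refine ⟨s1 + s2, T1 + T2, by omega, by rw [he1, he2]; ring,
          Nat.dvd_add hd1 hd2, ?_, by omega⟩
        have := Nat.add_le_add hl1 hl2
        calc (s1 + s2) * (k * 2 ^ n + 1) = s1 * (k * 2 ^ n + 1) + s2 * (k * 2 ^ n + 1) := by
              ring
          _ ≤ a + b := this
  obtain h | ⟨s, T, hs, heq, hdvd, hle, hone⟩ := hP _ hmem
  · omega
  rcases Nat.lt_or_ge s 2 with hs2 | hs2
  · -- s = 1 : single generator
    have hs1 : s = 1 := by omega
    obtain ⟨i, hi, rfl⟩ := hone hs1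
    subst hs1
    have : k * 2 ^ (n + i) = k * 2 ^ (2 * n + r) := by omega
    have hpow : (2:ℕ) ^ (n + i) = 2 ^ (2 * n + r) :=
      Nat.eq_of_mul_eq_mul_left hkpos this
    have := Nat.pow_right_injective (le_refl 2) hpow
    omega
  · -- s ≥ 2
    have hTlt : T < 2 ^ (2 * n + r) := by
      have hkT : k * T < k * 2 ^ (2 * n + r) := by omega
      exact Nat.lt_of_mul_lt_mul_left hkT
    set d := 2 ^ (2 * n + r) - T with hd
    have hTd : T + d = 2 ^ (2 * n + r) := by omega
    have hdvd2 : 2 ^ n ∣ d :=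
      Nat.dvd_sub (pow_dvd_pow 2 (by omega)) hdvd
    have hdpos : 0 < d := by omega
    have hdge : 2 ^ n ≤ d := Nat.le_of_dvd hdpos hdvd2
    have hseq : s = k * d + 1 := by
      have : k * T + k * d = k * 2 ^ (2 * n + r) := by
        rw [← Nat.mul_add, hTd]
      omega
    have hsge : k * 2 ^ n + 1 ≤ s := by
      have := Nat.mul_le_mul_left k hdge
      omega
    have hbig : (k * 2 ^ n + 1) * (k * 2 ^ n + 1) ≤ k * 2 ^ (2 * n + r) + 1 := by
      calc (k * 2 ^ n + 1) * (k * 2 ^ n + 1) ≤ s * (k * 2 ^ n + 1) :=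
            Nat.mul_le_mul_right _ hsge
        _ ≤ k * 2 ^ (2 * n + r) + 1 := hle
    have hsmall : k * 2 ^ (2 * n + r) + 1 < (k * 2 ^ n + 1) * (k * 2 ^ n + 1) := by
      have hpow : (2:ℕ) ^ (2 * n + r) = 2 ^ n * 2 ^ n * 2 ^ r := by
        rw [← pow_add, ← pow_add]; ring_nf
      rw [hpow]
      have h2n : (1:ℕ) ≤ 2 ^ n := Nat.one_le_two_pow
      nlinarith [sq_nonneg (2 ^ n : ℕ), hr1, h2n, Nat.mul_le_mul_left (2 ^ n * 2 ^ n) hr1.le]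
    omega
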